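/- Let a > b > 0, let E = {(x,y) ∈ ℝ² : x²/a² + y²/b² = 1} be the ellipse, and let f : ℝ² → ℝ be the squared Euclidean distance to E, f(p) = (dist(p,E))². At the point P₀ = ((a²−b²)/a, 0), f is differentiable with derivative the linear map (α,β) ↦ −(2b²/a)·α, but f is not twice differentiable at P₀: the derivative map p ↦ Df_p is not differentiable at P₀. -/

import Mathlib

open Metric Real

noncomputable def pt (x y : ℝ) : EuclideanSpace ℝ (Fin 2) :=
  (EuclideanSpace.equiv (Fin 2) ℝ).symm ![x, y]

@[simp] lemma pt_zero (x y : ℝ) : pt x y 0 = x := by simp [pt]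
@[simp] lemma pt_one (x y : ℝ) : pt x y 1 = y := by simp [pt]

def Ell (a b : ℝ) : Set (EuclideanSpace ℝ (Fin 2)) :=
  {p | (p 0) ^ 2 / a ^ 2 + (p 1) ^ 2 / b ^ 2 = 1}

lemma dist_sq_eq (p q : EuclideanSpace ℝ (Fin 2)) :
    dist p q ^ 2 = (p 0 - q 0)^2 + (p 1 - q 1)^2 := by
  rw [EuclideanSpace.dist_eq, Real.sq_sqrt (by positivity)]
  simp [Fin.sum_univ_two, Real.dist_eq, sq_abs]

variable {a b : ℝ}

lemma ell_facts (hb : 0 < b) (hab : b < a) {q : EuclideanSpace ℝ (Fin 2)}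
    (hq : q ∈ Ell a b) :
    q 1 ^ 2 = b^2 - b^2 * (q 0)^2 / a^2 ∧ (q 0)^2 ≤ a^2 := by
  have ha : (0:ℝ) < a := hb.trans hab
  have h : (q 0) ^ 2 / a ^ 2 + (q 1) ^ 2 / b ^ 2 = 1 := hq
  constructor
  · field_simp at h ⊢; nlinarith [h]
  · have h2 : (q 0)^2 / a^2 ≤ 1 := by
      have := div_nonneg (sq_nonneg (q 1)) (sq_nonneg b)
      linarith
    calc (q 0)^2 = ((q 0)^2/a^2) * a^2 := by field_simp
    _ ≤ 1 * a^2 := by nlinarith [sq_nonneg a]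
    _ = a^2 := one_mul _

/-- key quadratic identity: squared distance from an axis point to an ellipse point -/
lemma dist_sq_ell (hb : 0 < b) (hab : b < a) (x : ℝ) {q : EuclideanSpace ℝ (Fin 2)}
    (hq : q ∈ Ell a b) :
    dist (pt x 0) q ^ 2 =
      (b^2 - b^2*x^2/(a^2-b^2)) + ((a^2-b^2)/a^2) * (q 0 - x*a^2/(a^2-b^2))^2 := by
  have ha : (0:ℝ) < a := hb.trans hab
  have hc : a^2 - b^2 ≠ 0 := by nlinarith
  have ha' : a ≠ 0 := ne_of_gt ha
  obtain ⟨h1, _⟩ := ell_facts hb hab hq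
  rw [dist_sq_eq]
  rw [pt_zero, pt_one, show (0 - q 1)^2 = q 1 ^2 from by ring, h1]
  field_simp
  ring

lemma A_mem (hb : 0 < b) (hab : b < a) : pt a 0 ∈ Ell a b := by
  have ha : (0:ℝ) < a := hb.trans hab
  show (pt a 0 0)^2 / a^2 + (pt a 0 1)^2 / b^2 = 1
  simp; exact ha.ne'

lemma ell_nonempty (hb : 0 < b) (hab : b < a) : (Ell a b).Nonempty := ⟨_, A_mem hb hab⟩

lemma ell_compact (hb : 0 < b) (hab : b < a) : IsCompact (Ell a b) := by
  have ha : (0:ℝ) < a := hb.trans hab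
  rw [Metric.isCompact_iff_isClosed_bounded]
  constructor
  · have hc : Continuous fun p : EuclideanSpace ℝ (Fin 2) =>
        (p 0)^2 / a^2 + (p 1)^2 / b^2 := by
      apply Continuous.add
      · exact ((EuclideanSpace.proj (0 : Fin 2)).continuous.pow 2).div_const _
      · exact ((EuclideanSpace.proj (1 : Fin 2)).continuous.pow 2).div_const _
    exact isClosed_eq hc continuous_const
  · rw [Metric.isBounded_iff_subset_closedBall 0]
    refine ⟨a + b, fun q hq => ?_⟩
    obtain ⟨h1, h2⟩ := ell_facts hb hab hq
    have h3 : (q 1)^2 ≤ b^2 := by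
      rw [h1]; have := div_nonneg (mul_nonneg (sq_nonneg b) (sq_nonneg (q 0))) (sq_nonneg a)
      linarith
    have hd : dist q 0 ^ 2 = (q 0)^2 + (q 1)^2 := by
      rw [dist_sq_eq]; norm_num
    have : dist q (0 : EuclideanSpace ℝ (Fin 2)) ≤ a + b := by
      nlinarith [dist_nonneg (x := q) (y := (0 : EuclideanSpace ℝ (Fin 2)))]
    simpa [Metric.mem_closedBall] using this


lemma qstar_mem (hb : 0 < b) (hab : b < a) {x : ℝ} (h0 : 0 ≤ x)
    (h1 : x ≤ (a^2-b^2)/a) (σ : ℝ) (hσ : σ = 1 ∨ σ = -1) :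
    pt (x*a^2/(a^2-b^2)) (σ * Real.sqrt (b^2 - b^2*(x*a^2/(a^2-b^2))^2/a^2)) ∈ Ell a b := by
  have ha : (0:ℝ) < a := hb.trans hab
  have hc : (0:ℝ) < a^2 - b^2 := by nlinarith
  set u := x*a^2/(a^2-b^2) with hu
  have hua : u ≤ a := by
    rw [hu, div_le_iff₀ hc]
    calc x*a^2 = (x*a)*a := by ring
    _ ≤ ((a^2-b^2)/a*a)*a := by nlinarith
    _ = (a^2-b^2)*a := by field_simp
    _ = a*(a^2-b^2) := by ring
  have hu0 : 0 ≤ u := by positivity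
  have hv2 : (0:ℝ) ≤ b^2 - b^2*u^2/a^2 := by
    rw [sub_nonneg, div_le_iff₀ (by positivity : (0:ℝ) < a^2)]
    nlinarith [mul_le_mul hua hua hu0 ha.le, sq_nonneg b, sq_nonneg u]
  have hσ2 : σ^2 = 1 := by rcases hσ with h | h <;> simp [h]
  show (pt u (σ * Real.sqrt (b^2 - b^2*u^2/a^2)) 0)^2/a^2
      + (pt u (σ * Real.sqrt (b^2 - b^2*u^2/a^2)) 1)^2/b^2 = 1
  rw [pt_zero, pt_one, mul_pow, hσ2, one_mul, Real.sq_sqrt hv2]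
  field_simp
  ring

lemma infDist_axis (hb : 0 < b) (hab : b < a) {x : ℝ} (h0 : 0 ≤ x)
    (h1 : x ≤ (a^2-b^2)/a) :
    infDist (pt x 0) (Ell a b) ^ 2 = b^2 - b^2*x^2/(a^2-b^2) := by
  have ha : (0:ℝ) < a := hb.trans hab
  have hc : (0:ℝ) < a^2 - b^2 := by nlinarith
  set m := b^2 - b^2*x^2/(a^2-b^2) with hm
  have hm0 : 0 ≤ m := by
    rw [hm, sub_nonneg, div_le_iff₀ hc]
    have hx2 : x^2 ≤ ((a^2-b^2)/a)^2 := by nlinarith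
    calc b^2*x^2 ≤ b^2*((a^2-b^2)/a)^2 := by nlinarith
    _ = b^2*(a^2-b^2)*((a^2-b^2)/a^2) := by field_simp
    _ ≤ b^2*(a^2-b^2)*1 := by
        apply mul_le_mul_of_nonneg_left _ (by positivity)
        rw [div_le_one (by positivity)]; nlinarith
    _ = b^2*(a^2-b^2) := by ring
  have key : infDist (pt x 0) (Ell a b) = Real.sqrt m := by
    apply le_antisymm
    · have hmem := qstar_mem hb hab h0 h1 1 (Or.inl rfl)
      refine le_trans (infDist_le_dist_of_mem hmem) ?_
      have hd := dist_sq_ell hb hab x hmem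
      rw [pt_zero] at hd
      have : dist (pt x 0) (pt (x*a^2/(a^2-b^2)) (1 * Real.sqrt (b^2 - b^2*(x*a^2/(a^2-b^2))^2/a^2))) ^2 = m := by
        rw [hd]; simp [hm]
      rw [← Real.sqrt_sq dist_nonneg, this]
    · obtain ⟨q, hq, heq⟩ := (ell_compact hb hab).exists_infDist_eq_dist (ell_nonempty hb hab) (pt x 0)
      rw [heq]
      have hd := dist_sq_ell hb hab x hq
      have hge : m ≤ dist (pt x 0) q ^ 2 := by
        rw [hd, ← hm]
        have : 0 ≤ ((a^2-b^2)/a^2) * (q 0 - x*a^2/(a^2-b^2))^2 := by positivity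
        linarith
      calc Real.sqrt m ≤ Real.sqrt (dist (pt x 0) q ^2) := Real.sqrt_le_sqrt hge
      _ = dist (pt x 0) q := Real.sqrt_sq dist_nonneg
  rw [key, Real.sq_sqrt hm0]

lemma abs_le_of_sq_le' {u r : ℝ} (h : u^2 ≤ r^2) (hr : 0 ≤ r) : |u| ≤ r := by
  rw [← Real.sqrt_sq_eq_abs]
  calc Real.sqrt (u^2) ≤ Real.sqrt (r^2) := Real.sqrt_le_sqrt h
  _ = r := Real.sqrt_sq hr

set_option maxHeartbeats 1000000 in
lemma hasFDeriv (hb : 0 < b) (hab : b < a) :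
    HasFDerivAt (fun p : EuclideanSpace ℝ (Fin 2) => infDist p (Ell a b) ^ 2)
      ((-(2*b^2/a)) • (EuclideanSpace.proj (0 : Fin 2) : EuclideanSpace ℝ (Fin 2) →L[ℝ] ℝ))
      (pt ((a^2-b^2)/a) 0) := by
  have ha : (0:ℝ) < a := hb.trans hab
  have hc : (0:ℝ) < a^2 - b^2 := by nlinarith
  set x₀ : ℝ := (a^2-b^2)/a with hx₀
  have hx₀0 : 0 ≤ x₀ := by positivity
  have hfP₀ : infDist (pt x₀ 0) (Ell a b) ^ 2 = b^4/a^2 := by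
    rw [infDist_axis hb hab hx₀0 le_rfl, hx₀]
    field_simp
    ring
  rw [hasFDerivAt_iff_isLittleO_nhds_zero, Asymptotics.isLittleO_iff]
  intro ε hε
  set s₀ : ℝ := min (ε/4) (ε^2*a/(32*b^2)) with hs₀def
  have hs₀pos : 0 < s₀ := lt_min (by positivity) (by positivity)
  have hs₀1 : s₀ ≤ ε/4 := min_le_left _ _
  have hs₀2 : s₀ ≤ ε^2*a/(32*b^2) := min_le_right _ _
  set μ : ℝ := (a^2-b^2)/a^2 with hμdef
  have hμpos : 0 < μ := by positivity
  set δ : ℝ := min ε (μ * s₀^2 / (4*a+2*b)) with hδdef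
  have hδpos : 0 < δ := lt_min hε (by positivity)
  rw [Metric.eventually_nhds_iff]
  refine ⟨δ, hδpos, fun {h} hdist => ?_⟩
  set r : ℝ := ‖h‖ with hrdef
  have hr0 : 0 ≤ r := norm_nonneg h
  have hrδ : r < δ := by rwa [dist_zero_right] at hdist
  have hrε : r ≤ ε := le_trans hrδ.le (min_le_left _ _)
  set X : ℝ := h 0 with hX
  set Y : ℝ := h 1 with hY
  have hr2 : r^2 = X^2 + Y^2 := by
    rw [hrdef, EuclideanSpace.norm_eq, Real.sq_sqrt (by positivity)]
    simp [Fin.sum_univ_two, sq_abs, hX, hY]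
  have hXr : |X| ≤ r := abs_le_of_sq_le' (by linarith [sq_nonneg Y]) hr0
  have hYr : |Y| ≤ r := abs_le_of_sq_le' (by linarith [sq_nonneg X]) hr0
  -- coordinates of the shifted point
  have hp0 : (pt x₀ 0 + h) 0 = x₀ + X := rfl
  have hp1 : (pt x₀ 0 + h) 1 = 0 + Y := rfl
  -- nearest point
  obtain ⟨q, hq, heq⟩ := (ell_compact hb hab).exists_infDist_eq_dist
    (ell_nonempty hb hab) (pt x₀ 0 + h)
  obtain ⟨hq1, hq0⟩ := ell_facts hb hab hq
  set s : ℝ := a - q 0 with hsdef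
  have habsq : |q 0| ≤ a := abs_le_of_sq_le' hq0 ha.le
  have hs0 : 0 ≤ s := by
    rw [hsdef]; linarith [le_abs_self (q 0)]
  have hs2a : s ≤ 2*a := by
    rw [hsdef]; linarith [neg_abs_le (q 0)]
  have hq1b2 : (q 1)^2 ≤ b^2 := by
    rw [hq1]
    have : 0 ≤ b^2*(q 0)^2/a^2 := by positivity
    linarith
  have hq1b : |q 1| ≤ b := abs_le_of_sq_le' hq1b2 hb.le
  have hq1K : (q 1)^2 ≤ 2*b^2/a * s := by
    have key : 2*b^2/a*s - (b^2 - b^2*(q 0)^2/a^2) = (b^2/a^2)*s^2 := by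
      rw [hsdef]; field_simp; ring
    have : 0 ≤ (b^2/a^2)*s^2 := by positivity
    rw [hq1]; linarith
  -- the squared distance, in coordinates
  have hdq : dist (pt x₀ 0 + h) q ^ 2 = (x₀ + X - q 0)^2 + (Y - q 1)^2 := by
    rw [dist_sq_eq, hp0, hp1]; ring
  -- main identity
  set D : ℝ := dist (pt x₀ 0 + h) q ^2 - b^4/a^2 + (2*b^2/a)*X with hDdef
  have hiden : D = X^2 + Y^2 + 2*(X*s) - 2*(Y*(q 1)) + μ*s^2 := by
    rw [hDdef, hdq]
    have e : (Y - q 1)^2 = Y^2 - 2*Y*(q 1) + (q 1)^2 := by ring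
    rw [e, hq1, hsdef, hμdef, hx₀]
    field_simp
    ring
  have hδ2 : δ ≤ μ * s₀^2 / (4*a+2*b) := min_le_right _ _
  clear_value x₀ s₀ μ δ r X Y s D
  -- upper bound : use the point (a,0)
  have hupper : D ≤ r^2 := by
    have hle : infDist (pt x₀ 0 + h) (Ell a b) ≤ dist (pt x₀ 0 + h) (pt a 0) :=
      infDist_le_dist_of_mem (A_mem hb hab)
    have hsq : dist (pt x₀ 0 + h) q ^2 ≤ dist (pt x₀ 0 + h) (pt a 0) ^2 := by
      rw [← heq]
      exact pow_le_pow_left₀ Metric.infDist_nonneg hle 2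
    have hdA : dist (pt x₀ 0 + h) (pt a 0) ^2 = (x₀ + X - a)^2 + Y^2 := by
      rw [dist_sq_eq, hp0, hp1]; simp
    have hidA : (x₀ + X - a)^2 + Y^2 - b^4/a^2 + (2*b^2/a)*X = X^2 + Y^2 := by
      rw [hx₀]; field_simp; ring
    rw [hdA] at hsq
    rw [hDdef, hr2]
    linarith [hsq, hidA]
  -- product estimates for X*s and Y*q1
  have eXlow : -(r*s) ≤ X*s := by
    have h1 := mul_le_mul_of_nonneg_right (neg_abs_le X) hs0
    have h2 := mul_le_mul_of_nonneg_right hXr hs0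
    have e : (-|X|)*s = -(|X| * s) := by ring
    rw [e] at h1
    linarith
  have eY : Y*(q 1) ≤ |Y| * |q 1| := by
    calc Y*(q 1) ≤ |Y*(q 1)| := le_abs_self _
    _ = |Y| * |q 1| := abs_mul _ _
  -- lower bound
  have hlower : -(ε*r) ≤ D := by
    rcases le_or_gt s s₀ with hcase | hcase
    · -- small s
      have hsε : s ≤ ε/4 := le_trans hcase hs₀1
      have hq1ε : |q 1| ≤ ε/4 := by
        apply abs_le_of_sq_le' _ (by positivity)
        have h1 : (q 1)^2 ≤ 2*b^2/a * s₀ := by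
          refine le_trans hq1K ?_
          exact mul_le_mul_of_nonneg_left hcase (by positivity)
        have h2 : 2*b^2/a * s₀ ≤ 2*b^2/a * (ε^2*a/(32*b^2)) :=
          mul_le_mul_of_nonneg_left hs₀2 (by positivity)
        have h3 : 2*b^2/a * (ε^2*a/(32*b^2)) = (ε/4)^2/2 + (ε/4)^2/2 - (ε/4)^2 + ε^2/16 := by
          field_simp; ring
        have h4 : ε^2/16 = (ε/4)^2 := by ring
        linarith
      have e2 : r*s ≤ r*(ε/4) := mul_le_mul_of_nonneg_left hsε hr0
      have e3 : |Y| * |q 1| ≤ r*(ε/4) := mul_le_mul hYr hq1ε (abs_nonneg _) hr0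
      have hpos1 : 0 ≤ X^2 := sq_nonneg X
      have hpos2 : 0 ≤ Y^2 := sq_nonneg Y
      have hpos3 : 0 ≤ μ*s^2 := mul_nonneg hμpos.le (sq_nonneg s)
      rw [hiden]; linarith
    · -- large s
      have hss : μ*s₀^2 ≤ μ*s^2 := by
        apply mul_le_mul_of_nonneg_left _ hμpos.le
        have := mul_le_mul hcase.le hcase.le hs₀pos.le hs0
        calc s₀^2 = s₀*s₀ := sq s₀
        _ ≤ s*s := this
        _ = s^2 := (sq s).symm
      have e2 : r*s ≤ r*(2*a) := mul_le_mul_of_nonneg_left hs2a hr0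
      have e3 : |Y| * |q 1| ≤ r*b := mul_le_mul hYr hq1b (abs_nonneg _) hr0
      have hrbound : r ≤ μ * s₀^2 / (4*a+2*b) := le_trans hrδ.le hδ2
      have hrb2 : r*(4*a+2*b) ≤ μ*s₀^2 :=
        (le_div_iff₀ (by positivity : (0:ℝ) < 4*a+2*b)).1 hrbound
      have hpos1 : 0 ≤ X^2 := sq_nonneg X
      have hpos2 : 0 ≤ Y^2 := sq_nonneg Y
      have hεr : 0 ≤ ε*r := by positivity
      rw [hiden]; linarith
  -- conclude
  have hr2e : r^2 ≤ ε*r := by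
    rw [pow_two]; exact mul_le_mul_of_nonneg_right hrε hr0
  have habs : |D| ≤ ε * r := by
    rw [abs_le]
    exact ⟨by linarith, by linarith⟩
  have hLh : ((-(2*b^2/a)) • (EuclideanSpace.proj (0 : Fin 2) :
      EuclideanSpace ℝ (Fin 2) →L[ℝ] ℝ)) h = -(2*b^2/a)*X := by
    simp [hX]
  have final : ‖infDist (pt x₀ 0 + h) (Ell a b) ^2 - infDist (pt x₀ 0) (Ell a b) ^2 -
      ((-(2*b^2/a)) • (EuclideanSpace.proj (0 : Fin 2) :
        EuclideanSpace ℝ (Fin 2) →L[ℝ] ℝ)) h‖ ≤ ε * r := by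
    calc ‖infDist (pt x₀ 0 + h) (Ell a b) ^2 - infDist (pt x₀ 0) (Ell a b) ^2 -
        ((-(2*b^2/a)) • (EuclideanSpace.proj (0 : Fin 2) :
          EuclideanSpace ℝ (Fin 2) →L[ℝ] ℝ)) h‖ = |D| := by
          rw [heq, hfP₀, hLh, Real.norm_eq_abs, hDdef]
          ring_nf
    _ ≤ ε * r := habs
  exact final

lemma not_diff_axis (hb : 0 < b) (hab : b < a) {x : ℝ} (h0 : 0 < x)
    (h1 : x < (a^2-b^2)/a) :
    ¬ DifferentiableAt ℝ (fun p : EuclideanSpace ℝ (Fin 2) => infDist p (Ell a b) ^ 2)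
      (pt x 0) := by
  intro hd
  have ha : (0:ℝ) < a := hb.trans hab
  have hc : (0:ℝ) < a^2 - b^2 := by nlinarith
  set u : ℝ := x*a^2/(a^2-b^2) with hu
  set m : ℝ := b^2 - b^2*x^2/(a^2-b^2) with hm
  have hua : u < a := by
    rw [hu, div_lt_iff₀ hc]
    calc x*a^2 = (x*a)*a := by ring
    _ < ((a^2-b^2)/a*a)*a := by nlinarith
    _ = (a^2-b^2)*a := by field_simp
    _ = a*(a^2-b^2) := by ring
  have hu0 : 0 ≤ u := by positivity
  have hv2pos : (0:ℝ) < b^2 - b^2*u^2/a^2 := by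
    rw [sub_pos, div_lt_iff₀ (by positivity : (0:ℝ) < a^2)]
    have h' : u*u < a*a := mul_lt_mul' hua.le hua hu0 ha
    nlinarith [mul_pos (show (0:ℝ) < b^2 by positivity) (sub_pos.2 h')]
  set v : ℝ := Real.sqrt (b^2 - b^2*u^2/a^2) with hv
  have hv2 : v^2 = b^2 - b^2*u^2/a^2 := Real.sq_sqrt hv2pos.le
  have hvpos : 0 < v := Real.sqrt_pos.2 hv2pos
  have hqp : pt u v ∈ Ell a b := by
    have := qstar_mem hb hab h0.le h1.le 1 (Or.inl rfl)
    simpa [hu, hv] using this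
  have hqm : pt u (-v) ∈ Ell a b := by
    have := qstar_mem hb hab h0.le h1.le (-1) (Or.inr rfl)
    have e : (-1 : ℝ) * Real.sqrt (b^2 - b^2*(x*a^2/(a^2-b^2))^2/a^2) = -v := by
      rw [hv, hu]; ring
    rwa [e] at this
  have hkey : (x-u)^2 + v^2 = m := by
    rw [hv2, hu, hm]; field_simp; ring
  have hfm : infDist (pt x 0) (Ell a b) ^ 2 = m := infDist_axis hb hab h0.le h1.le
  -- the vertical line through (x,0)
  have hφ : ∀ t : ℝ, pt x 0 + t • pt 0 1 = pt x t := by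
    intro t
    ext i
    fin_cases i <;> simp [pt]
  have hline : HasDerivAt (fun t : ℝ => pt x t) (pt 0 1) 0 := by
    have h1' : HasDerivAt (fun t : ℝ => pt x 0 + t • pt 0 1) ((1:ℝ) • pt 0 1) 0 :=
      ((hasDerivAt_id 0).smul_const (pt 0 1)).const_add (pt x 0)
    simp only [hφ, one_smul] at h1'
    exact h1'
  set g : ℝ → ℝ := fun t => infDist (pt x t) (Ell a b) ^ 2 with hg
  set d : ℝ := fderiv ℝ (fun p : EuclideanSpace ℝ (Fin 2) => infDist p (Ell a b) ^ 2)
      (pt x 0) (pt 0 1) with hd'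
  have hgd : HasDerivAt g d 0 := by
    have := hd.hasFDerivAt.comp_hasDerivAt 0 (by simpa using hline)
    exact this
  have hg0 : g 0 = m := hfm
  -- upper bounds from the two nearest points
  have hup : ∀ t : ℝ, g t ≤ m - 2*v*t + t^2 := by
    intro t
    have hle : infDist (pt x t) (Ell a b) ≤ dist (pt x t) (pt u v) :=
      infDist_le_dist_of_mem hqp
    have h2 : g t ≤ dist (pt x t) (pt u v) ^2 :=
      pow_le_pow_left₀ Metric.infDist_nonneg hle 2
    have h3 : dist (pt x t) (pt u v) ^2 = (x-u)^2 + (t-v)^2 := by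
      rw [dist_sq_eq]; simp only [pt_zero, pt_one]
    have h4 : (x-u)^2 + (t-v)^2 = m - 2*v*t + t^2 := by
      rw [← hkey]; ring
    linarith [h2, h3.symm ▸ h2]
  have hdn : ∀ t : ℝ, g t ≤ m + 2*v*t + t^2 := by
    intro t
    have hle : infDist (pt x t) (Ell a b) ≤ dist (pt x t) (pt u (-v)) :=
      infDist_le_dist_of_mem hqm
    have h2 : g t ≤ dist (pt x t) (pt u (-v)) ^2 :=
      pow_le_pow_left₀ Metric.infDist_nonneg hle 2
    have h3 : dist (pt x t) (pt u (-v)) ^2 = (x-u)^2 + (t+v)^2 := by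
      rw [dist_sq_eq]; simp only [pt_zero, pt_one]; ring
    have h4 : (x-u)^2 + (t+v)^2 = m + 2*v*t + t^2 := by
      rw [← hkey]; ring
    linarith
  -- slope limits
  have hT : Filter.Tendsto (slope g 0) (nhdsWithin 0 {(0:ℝ)}ᶜ) (nhds d) :=
    hasDerivAt_iff_tendsto_slope.1 hgd
  have hright : d ≤ -v := by
    have hT' : Filter.Tendsto (slope g 0) (nhdsWithin 0 (Set.Ioi 0)) (nhds d) :=
      hT.mono_left (nhdsWithin_mono 0 (fun t ht => ne_of_gt ht))
    refine le_of_tendsto hT' ?_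
    have hmem : Set.Ioo (0:ℝ) v ∈ nhdsWithin (0:ℝ) (Set.Ioi 0) :=
      Ioo_mem_nhdsGT_of_mem ⟨le_refl 0, hvpos⟩
    filter_upwards [hmem] with t ht
    have ht0 : 0 < t := ht.1
    have htv : t < v := ht.2
    rw [slope_def_field, sub_zero, div_le_iff₀ ht0]
    have := hup t
    nlinarith
  have hleft : v ≤ d := by
    have hT' : Filter.Tendsto (slope g 0) (nhdsWithin 0 (Set.Iio 0)) (nhds d) :=
      hT.mono_left (nhdsWithin_mono 0 (fun t ht => ne_of_lt ht))
    refine ge_of_tendsto hT' ?_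
    have hmem : Set.Ioo (-v) (0:ℝ) ∈ nhdsWithin (0:ℝ) (Set.Iio 0) :=
      Ioo_mem_nhdsLT_of_mem ⟨neg_lt_zero.2 hvpos, le_refl 0⟩
    filter_upwards [hmem] with t ht
    have ht0 : t < 0 := ht.2
    have htv : -v < t := ht.1
    rw [slope_def_field, sub_zero, le_div_iff_of_neg ht0]
    have := hdn t
    nlinarith
  linarith

/-- Let a > b > 0 and let E be the ellipse x²/a² + y²/b² = 1 in the Euclidean
plane.  Let f be the squared distance to E.  At P₀ = ((a²−b²)/a, 0), f is differentiable with
derivative the linear map (α,β) ↦ −(2b²/a)·α, but f is not twice differentiable at P₀: the map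
p ↦ Df_p is not differentiable at P₀. -/
theorem ellipse_dist_sq_differentiable_not_twice (a b : ℝ) (hb : 0 < b) (hab : b < a) :
    letI E : Set (EuclideanSpace ℝ (Fin 2)) :=
      {p | (p 0) ^ 2 / a ^ 2 + (p 1) ^ 2 / b ^ 2 = 1}
    letI f : EuclideanSpace ℝ (Fin 2) → ℝ := fun p => (Metric.infDist p E) ^ 2
    letI P₀ : EuclideanSpace ℝ (Fin 2) :=
      (EuclideanSpace.equiv (Fin 2) ℝ).symm ![(a ^ 2 - b ^ 2) / a, 0]
    (∃ L : EuclideanSpace ℝ (Fin 2) →L[ℝ] ℝ,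
      HasFDerivAt f L P₀ ∧ ∀ v : EuclideanSpace ℝ (Fin 2), L v = -(2 * b ^ 2 / a) * v 0) ∧
    ¬ DifferentiableAt ℝ (fderiv ℝ f) P₀ := by
  show (∃ L : EuclideanSpace ℝ (Fin 2) →L[ℝ] ℝ,
      HasFDerivAt (fun p : EuclideanSpace ℝ (Fin 2) => (Metric.infDist p (Ell a b)) ^ 2)
        L (pt ((a^2-b^2)/a) 0) ∧
      ∀ v : EuclideanSpace ℝ (Fin 2), L v = -(2 * b ^ 2 / a) * v 0) ∧
    ¬ DifferentiableAt ℝ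
      (fderiv ℝ (fun p : EuclideanSpace ℝ (Fin 2) => (Metric.infDist p (Ell a b)) ^ 2))
      (pt ((a^2-b^2)/a) 0)
  have ha : (0:ℝ) < a := hb.trans hab
  have hc : (0:ℝ) < a^2 - b^2 := by nlinarith
  set L : EuclideanSpace ℝ (Fin 2) →L[ℝ] ℝ :=
    (-(2*b^2/a)) • (EuclideanSpace.proj (0 : Fin 2)) with hL
  have hmain : HasFDerivAt (fun p : EuclideanSpace ℝ (Fin 2) => Metric.infDist p (Ell a b) ^ 2)
      L (pt ((a^2-b^2)/a) 0) := hasFDeriv hb hab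
  refine ⟨⟨L, hmain, fun v => by simp [hL]⟩, ?_⟩
  intro hdiff
  have hcont := hdiff.continuousAt
  have hfd : fderiv ℝ (fun p : EuclideanSpace ℝ (Fin 2) => Metric.infDist p (Ell a b) ^ 2)
      (pt ((a^2-b^2)/a) 0) = L := hmain.fderiv
  set c : ℝ := 2*b^2/a with hcdef
  have hcpos : 0 < c := by positivity
  obtain ⟨δ, hδpos, hδ⟩ := Metric.continuousAt_iff.1 hcont (c/2) (by positivity)
  set x₀ : ℝ := (a^2-b^2)/a with hx₀
  have hx₀pos : 0 < x₀ := by positivity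
  set x : ℝ := x₀ - min (δ/2) (x₀/2) with hxdef
  have hminpos : 0 < min (δ/2) (x₀/2) := lt_min (by positivity) (by positivity)
  have hx0 : 0 < x := by
    have : min (δ/2) (x₀/2) ≤ x₀/2 := min_le_right _ _
    rw [hxdef]; linarith
  have hx1 : x < x₀ := by rw [hxdef]; linarith
  have hdd : dist (pt x 0) (pt x₀ 0) < δ := by
    have hsq : dist (pt x 0) (pt x₀ 0) ^2 = (x - x₀)^2 := by
      rw [dist_sq_eq]; simp
    have hminδ : min (δ/2) (x₀/2) ≤ δ/2 := min_le_left _ _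
    have h2 : dist (pt x 0) (pt x₀ 0) ^2 ≤ (δ/2)^2 := by
      rw [hsq, hxdef]
      have e : x₀ - min (δ/2) (x₀/2) - x₀ = -(min (δ/2) (x₀/2)) := by ring
      rw [e]
      calc (-(min (δ/2) (x₀/2)))^2 = (min (δ/2) (x₀/2))^2 := by ring
      _ ≤ (δ/2)^2 := by nlinarith [hminpos]
    have h3 : |dist (pt x 0) (pt x₀ 0)| ≤ δ/2 := abs_le_of_sq_le' h2 (by positivity)
    rw [abs_of_nonneg dist_nonneg] at h3
    linarith
  have hzero : fderiv ℝ (fun p : EuclideanSpace ℝ (Fin 2) => Metric.infDist p (Ell a b) ^ 2)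
      (pt x 0) = 0 := fderiv_zero_of_not_differentiableAt (not_diff_axis hb hab hx0 hx1)
  have hnear := hδ hdd
  rw [hzero, hfd, dist_zero_left] at hnear
  -- but ‖L‖ ≥ c
  have hLe : L (EuclideanSpace.single (0 : Fin 2) (1:ℝ)) = -c := by
    simp [hL, hcdef]
  have hnorm1 : ‖EuclideanSpace.single (0 : Fin 2) (1:ℝ)‖ = 1 := by
    rw [EuclideanSpace.norm_single]; norm_num
  have hLnorm : c ≤ ‖L‖ := by
    have h1 := L.le_opNorm (EuclideanSpace.single (0 : Fin 2) (1:ℝ))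
    rw [hLe, hnorm1, mul_one] at h1
    have : ‖(-c : ℝ)‖ = c := by rw [Real.norm_eq_abs, abs_neg, abs_of_pos hcpos]
    linarith [this ▸ h1]
  linarith
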